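/- Let F ⊂ Q₂ be a finite set and I ⊆ 𝔠 a nonempty finite union of standard dyadic intervals. If every v ∈ V with v(x) = x and v'(x) = 1 for all x ∈ F stabilizes I (v(I) = I), then I = 𝔠. -/

import Mathlib

/-! Basic setup: the Cantor space, prefix replacement, Thompson's group `V`,
slopes, dyadic rationals, standard dyadic partitions, locally constant maps,
and the permutation model of the twisted fraction groups `LΓ ⋊ V`. -/

abbrev Cantor : Type := ℕ → Bool

/-- Concatenation of a finite word with an infinite sequence. -/
def cat (w : List Bool) (x : Cantor) : Cantor :=
  fun n => if n < w.length then w.getD n false else x (n - w.length)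

/-- The standard dyadic interval (cylinder) associated to a finite word. -/
def cyl (w : List Bool) : Set Cantor := {x | ∃ y : Cantor, x = cat w y}

/-- Membership in Thompson's group `V`: a homeomorphism of the Cantor space which is
everywhere locally given by prefix replacement. -/
def memV (v : Cantor ≃ₜ Cantor) : Prop :=
  ∀ x : Cantor, ∃ (m w : List Bool) (y : Cantor),
    x = cat m y ∧ ∀ z : Cantor, v (cat m z) = cat w z

/-- `HasLogSlope v x k` : `k = log₂ v'(x)`, base-2 logarithm of the slope of `v` at `x`. -/
def HasLogSlope (v : Cantor ≃ₜ Cantor) (x : Cantor) (k : ℤ) : Prop :=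
  ∃ (m w : List Bool) (y : Cantor),
    x = cat m y ∧ (∀ z : Cantor, v (cat m z) = cat w z) ∧
      k = (m.length : ℤ) - (w.length : ℤ)

open Classical in
noncomputable def logSlope (v : Cantor ≃ₜ Cantor) (x : Cantor) : ℤ :=
  if h : ∃ k : ℤ, HasLogSlope v x k then h.choose else 0

/-- The eventually periodic sequence `c∞ = c·c·c⋯`. -/
def tailSeq (c : List Bool) : Cantor := fun n => c.getD (n % c.length) false

/-- `x` lies in the tail equivalence class of the word `c`, i.e. `x = y·c∞`. -/
def InTailClass (x : Cantor) (c : List Bool) : Prop :=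
  ∃ y : List Bool, x = cat y (tailSeq c)

/-- `x` is eventually periodic (a rational point of the Cantor space). -/
def EvPeriodic (x : Cantor) : Prop :=
  ∃ (y c : List Bool), c ≠ [] ∧ x = cat y (tailSeq c)

/-- A prime word: a nonempty word which is not a proper power of a word. -/
def PrimeWord (c : List Bool) : Prop :=
  c ≠ [] ∧ ∀ (d : List Bool) (k : ℕ), 2 ≤ k → c ≠ (List.replicate k d).flatten

/-- `conjH φ v = φ ∘ v ∘ φ⁻¹`. -/
def conjH (φ v : Cantor ≃ₜ Cantor) : Cantor ≃ₜ Cantor := φ.symm.trans (v.trans φ)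

/-- `φ` normalizes Thompson's group `V` inside `Homeo(𝔠)` : `φ V φ⁻¹ = V`. -/
def NormalizesV (φ : Cantor ≃ₜ Cantor) : Prop :=
  (conjH φ) '' {v | memV v} = {v | memV v}

/-- The copy of the dyadic rationals `Q₂ ⊂ 𝔠` : finitely supported sequences. -/
def InQ2 (x : Cantor) : Prop := ∃ n : ℕ, ∀ m, n ≤ m → x m = false

def zeroSeq : Cantor := fun _ => false

/-- A standard dyadic partition of the Cantor space. -/
def IsSDP (P : Finset (List Bool)) : Prop :=
  ∀ x : Cantor, ∃! w : List Bool, w ∈ P ∧ x ∈ cyl w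

/-- Locally constant map: constant on each piece of some standard dyadic partition. -/
def IsLC {Γ : Type*} (f : Cantor → Γ) : Prop :=
  ∃ P : Finset (List Bool), IsSDP P ∧ ∀ w ∈ P, ∀ y z : Cantor, f (cat w y) = f (cat w z)

/-- `h` agrees on `Q₂` with (the restriction of) a locally constant map. -/
def AgreesOnQ2WithLC {Γ : Type*} (h : Cantor → Γ) : Prop :=
  ∃ b : Cantor → Γ, IsLC b ∧ ∀ x, InQ2 x → h x = b x

section GroupPart
variable {Γ : Type*} [Group Γ]

/-- `alphaWord α₀ α₁ (m₁⋯m_k) = α_{m_k} ∘ ⋯ ∘ α_{m₁}`. -/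
def alphaWord (α₀ α₁ : Γ ≃* Γ) (m : List Bool) : Γ ≃* Γ :=
  m.foldl (fun acc b => acc.trans (if b then α₁ else α₀)) (MulEquiv.refl Γ)

open Classical in
/-- The twisting automorphism `τ_{v,x} = α_{v(I)}⁻¹ ∘ α_I` for a standard dyadic
interval `I` containing `x` and adapted to `v`. -/
noncomputable def tauEquiv (α₀ α₁ : Γ ≃* Γ) (v : Cantor ≃ₜ Cantor) (x : Cantor) : Γ ≃* Γ :=
  if h : ∃ p : List Bool × List Bool, x ∈ cyl p.1 ∧ ∀ z : Cantor, v (cat p.1 z) = cat p.2 z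
  then (alphaWord α₀ α₁ h.choose.1).trans (alphaWord α₀ α₁ h.choose.2).symm
  else MulEquiv.refl Γ

/-- The element `a·v` of the twisted `LΓ ⋊ V`, realized as the permutation
`(x,g) ↦ (v x, a(v x) · τ_{v,x}(g))` of `𝔠 × Γ`. -/
noncomputable def permOf (α₀ α₁ : Γ ≃* Γ) (a : Cantor → Γ) (v : Cantor ≃ₜ Cantor) :
    Equiv.Perm (Cantor × Γ) where
  toFun p := (v p.1, a (v p.1) * tauEquiv α₀ α₁ v p.1 p.2)
  invFun p := (v.symm p.1, (tauEquiv α₀ α₁ v (v.symm p.1)).symm ((a p.1)⁻¹ * p.2))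
  left_inv := by rintro ⟨x, g⟩; simp
  right_inv := by rintro ⟨x, g⟩; simp

end GroupPart

/-- The twisted fraction group `G = LΓ ⋊ V` of the triple `(Γ, α₀, α₁)`,
as a group of permutations of `𝔠 × Γ`. -/
noncomputable def Gsub (Γ : Type*) [Group Γ] (α₀ α₁ : Γ ≃* Γ) :
    Subgroup (Equiv.Perm (Cantor × Γ)) :=
  Subgroup.closure {p | ∃ a v, IsLC a ∧ memV v ∧ p = permOf α₀ α₁ a v}

/-- The untwisted case `α₀ = α₁ = id`. -/
noncomputable def permOfU {Γ : Type*} [Group Γ] (a : Cantor → Γ) (v : Cantor ≃ₜ Cantor) :=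
  permOf (MulEquiv.refl Γ) (MulEquiv.refl Γ) a v

/-- The untwisted fraction group `G = LΓ ⋊ V`. -/
noncomputable def GsubU (Γ : Type*) [Group Γ] := Gsub Γ (MulEquiv.refl Γ) (MulEquiv.refl Γ)

/-- `f ∈ N_{K̄}(G)` : the element `f` of `K̄ = ∏_{Q₂}Γ` normalizes `G = LΓ ⋊ V`
(untwisted case), i.e. `f·a·(f^v)⁻¹` and `f⁻¹·a·f^v` are locally constant on `Q₂`. -/
def InNormKbar {Γ : Type*} [Group Γ] (f : Cantor → Γ) : Prop :=
  ∀ (a : Cantor → Γ) (v : Cantor ≃ₜ Cantor), IsLC a → memV v →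
    AgreesOnQ2WithLC (fun x => f x * a x * (f (v.symm x))⁻¹) ∧
    AgreesOnQ2WithLC (fun x => (f x)⁻¹ * a x * f (v.symm x))

def Matches (w : List Bool) (x : Cantor) : Prop := ∀ i < w.length, x i = w.getD i false

instance (w : List Bool) (x : Cantor) : Decidable (Matches w x) := by
  unfold Matches; infer_instance

lemma cat_lt (w : List Bool) (x : Cantor) {n : ℕ} (h : n < w.length) :
    cat w x n = w.getD n false := if_pos h

lemma cat_ge (w : List Bool) (x : Cantor) {n : ℕ} (h : w.length ≤ n) :
    cat w x n = x (n - w.length) := if_neg (by omega)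

lemma mem_cyl_iff {w : List Bool} {x : Cantor} : x ∈ cyl w ↔ Matches w x := by
  constructor
  · rintro ⟨y, rfl⟩ i hi; exact cat_lt w y hi
  · intro h
    refine ⟨fun n => x (n + w.length), funext fun n => ?_⟩
    by_cases hn : n < w.length
    · rw [cat_lt _ _ hn]; exact h n hn
    · rw [cat_ge _ _ (by omega)]; congr 1; omega

lemma matches_cat (w : List Bool) (z : Cantor) : Matches w (cat w z) :=
  fun i hi => cat_lt w z hi

lemma matches_congr {w : List Bool} {x x' : Cantor}
    (h : ∀ i < w.length, x i = x' i) : Matches w x ↔ Matches w x' := by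
  unfold Matches
  exact forall₂_congr fun i hi => by rw [h i hi]

lemma eq_of_matches_matches {a b : List Bool} {x : Cantor} (hlen : b.length = a.length)
    (ha : Matches a x) (hb : Matches b x) : a = b := by
  apply List.ext_getElem hlen.symm
  intro i h1 h2
  have := (ha i h1).symm.trans (hb i h2)
  rwa [List.getD_eq_getElem _ _ h1, List.getD_eq_getElem _ _ h2] at this

noncomputable def swapFun (a b : List Bool) (x : Cantor) : Cantor :=
  fun n => if n < a.length then
    (if Matches a x then b.getD n false
     else if Matches b x then a.getD n false
     else x n)
  else x n

lemma swap_cat_a {a b : List Bool} (hlen : b.length = a.length) (z : Cantor) :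
    swapFun a b (cat a z) = cat b z := by
  funext n
  unfold swapFun
  by_cases hn : n < a.length
  · rw [if_pos hn, if_pos (matches_cat a z), cat_lt _ _ (by omega)]
  · rw [if_neg hn, cat_ge _ _ (by omega), cat_ge _ _ (by omega), hlen]

lemma swap_cat_b {a b : List Bool} (hlen : b.length = a.length) (hne : a ≠ b) (z : Cantor) :
    swapFun a b (cat b z) = cat a z := by
  have hna : ¬ Matches a (cat b z) := fun h => hne (eq_of_matches_matches hlen h (matches_cat b z))
  funext n
  unfold swapFun
  by_cases hn : n < a.length
  · rw [if_pos hn, if_neg hna, if_pos (matches_cat b z), cat_lt _ _ hn]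
  · rw [if_neg hn, cat_ge _ _ (by omega), cat_ge _ _ (by omega), hlen]

lemma swap_id {a b : List Bool} {x : Cantor} (hna : ¬ Matches a x) (hnb : ¬ Matches b x) :
    swapFun a b x = x := by
  funext n
  unfold swapFun
  by_cases hn : n < a.length
  · rw [if_pos hn, if_neg hna, if_neg hnb]
  · rw [if_neg hn]

lemma swap_invol {a b : List Bool} (hlen : b.length = a.length) (hne : a ≠ b) (x : Cantor) :
    swapFun a b (swapFun a b x) = x := by
  by_cases ha : Matches a x
  · obtain ⟨z, rfl⟩ := mem_cyl_iff.2 ha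
    rw [swap_cat_a hlen, swap_cat_b hlen hne]
  · by_cases hb : Matches b x
    · obtain ⟨z, rfl⟩ := mem_cyl_iff.2 hb
      rw [swap_cat_b hlen hne, swap_cat_a hlen]
    · rw [swap_id ha hb, swap_id ha hb]

lemma swap_continuous (a b : List Bool) (hlen : b.length = a.length) :
    Continuous (swapFun a b) := by
  apply continuous_pi
  intro n
  by_cases hn : n < a.length
  · have : (fun x => swapFun a b x n) =
        (fun u : Fin a.length → Bool =>
          if (∀ i : Fin a.length, u i = a.getD i.val false) then b.getD n false
          else if (∀ i : Fin a.length, u i = b.getD i.val false) then a.getD n false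
          else u ⟨n, hn⟩) ∘ (fun x (i : Fin a.length) => x i.val) := by
      funext x
      simp only [Function.comp]
      unfold swapFun
      rw [if_pos hn]
      apply if_congr
      · constructor
        · intro h i; exact h i.val i.isLt
        · intro h i hi; exact h ⟨i, hi⟩
      · rfl
      · apply if_congr
        · constructor
          · intro h i; exact h i.val (by omega)
          · intro h i hi; exact h ⟨i, by omega⟩
        · rfl
        · rfl
    rw [this]
    exact (continuous_of_discreteTopology).comp (continuous_pi fun i => continuous_apply i.val)
  · have : (fun x => swapFun a b x n) = fun x => x n := by
      funext x; unfold swapFun; rw [if_neg hn]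
    rw [this]; exact continuous_apply n

noncomputable def swapHomeo (a b : List Bool) (hlen : b.length = a.length) (hne : a ≠ b) :
    Cantor ≃ₜ Cantor where
  toFun := swapFun a b
  invFun := swapFun a b
  left_inv := swap_invol hlen hne
  right_inv := swap_invol hlen hne
  continuous_toFun := swap_continuous a b hlen
  continuous_invFun := swap_continuous a b hlen

/-- prefix word of x of length L -/
def pref (x : Cantor) (L : ℕ) : List Bool := List.ofFn (fun i : Fin L => x i.val)

lemma pref_length (x : Cantor) (L : ℕ) : (pref x L).length = L := by
  simp [pref]

lemma pref_getD (x : Cantor) (L : ℕ) {i : ℕ} (hi : i < L) :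
    (pref x L).getD i false = x i := by
  rw [List.getD_eq_getElem _ _ (by simp [pref_length, hi])]
  simp [pref]

lemma matches_pref (x : Cantor) (L : ℕ) : Matches (pref x L) x := by
  intro i hi
  rw [pref_getD x L (by rwa [pref_length] at hi)]

lemma matches_of_pref {w : List Bool} {x : Cantor} {L : ℕ} (hw : w.length ≤ L) {z : Cantor}
    (h : Matches w x) : Matches w (cat (pref x L) z) := by
  rw [matches_congr (x' := x)]
  · exact h
  · intro i hi
    rw [cat_lt _ _ (by rw [pref_length]; omega), pref_getD x L (by omega)]

lemma matches_of_pref_iff {w : List Bool} {x : Cantor} {L : ℕ} (hw : w.length ≤ L) (z : Cantor) :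
    Matches w (cat (pref x L) z) ↔ Matches w x := by
  apply matches_congr
  intro i hi
  rw [cat_lt _ _ (by rw [pref_length]; omega), pref_getD x L (by omega)]

lemma memV_swap (a b : List Bool) (hlen : b.length = a.length) (hne : a ≠ b) :
    memV (swapHomeo a b hlen hne) := by
  intro x
  by_cases ha : Matches a x
  · obtain ⟨z, rfl⟩ := mem_cyl_iff.2 ha
    exact ⟨a, b, z, rfl, fun z' => swap_cat_a hlen z'⟩
  · by_cases hb : Matches b x
    · obtain ⟨z, rfl⟩ := mem_cyl_iff.2 hb
      exact ⟨b, a, z, rfl, fun z' => swap_cat_b hlen hne z'⟩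
    · obtain ⟨y, hy⟩ := mem_cyl_iff.2 (matches_pref x a.length)
      refine ⟨pref x a.length, pref x a.length, y, hy, fun z => ?_⟩
      show swapFun a b _ = _
      apply swap_id
      · rw [matches_of_pref_iff le_rfl]; exact ha
      · rw [matches_of_pref_iff (by omega)]; exact hb

lemma swap_fix_and_slope (a b : List Bool) (hlen : b.length = a.length) (hne : a ≠ b)
    {x : Cantor} (ha : ¬ Matches a x) (hb : ¬ Matches b x) :
    swapHomeo a b hlen hne x = x ∧ HasLogSlope (swapHomeo a b hlen hne) x 0 := by
  constructor
  · exact swap_id ha hb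
  · obtain ⟨y, hy⟩ := mem_cyl_iff.2 (matches_pref x a.length)
    refine ⟨pref x a.length, pref x a.length, y, hy, fun z => ?_, by ring⟩
    show swapFun a b _ = _
    apply swap_id
    · rw [matches_of_pref_iff le_rfl]; exact ha
    · rw [matches_of_pref_iff (by omega)]; exact hb

/-- extend a word to length K+1, ending with `true` at position K. -/
def extWord (w : List Bool) (K : ℕ) : List Bool :=
  List.ofFn (fun i : Fin (K+1) => if i.val < w.length then w.getD i.val false else decide (i.val = K))

lemma extWord_length (w : List Bool) (K : ℕ) : (extWord w K).length = K + 1 := by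
  simp [extWord]

lemma extWord_getD (w : List Bool) (K : ℕ) {i : ℕ} (hi : i < K + 1) :
    (extWord w K).getD i false =
      if i < w.length then w.getD i false else decide (i = K) := by
  rw [List.getD_eq_getElem _ _ (by simp [extWord_length, hi])]
  show (List.ofFn _)[i]'_ = _
  exact List.getElem_ofFn ..

lemma matches_extWord_sub {w : List Bool} {K : ℕ} (hw : w.length ≤ K) {x : Cantor}
    (h : Matches (extWord w K) x) : Matches w x := by
  intro i hi
  have := h i (by rw [extWord_length]; omega)
  rwa [extWord_getD w K (by omega), if_pos hi] at this

lemma matches_extWord_last {w : List Bool} {K : ℕ} (hw : w.length ≤ K) {x : Cantor}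
    (h : Matches (extWord w K) x) : x K = true := by
  have := h K (by rw [extWord_length]; omega)
  rw [extWord_getD w K (by omega), if_neg (by omega)] at this; simpa using this


/-- If `F ⊂ Q₂` is finite, `I` a nonempty finite union of standard
dyadic intervals, and every `v ∈ V` fixing each point of `F` with slope `1` there
stabilizes `I`, then `I = 𝔠`. -/
theorem stabilized_union_is_everything (F : Finset Cantor) (hF : ∀ x ∈ F, InQ2 x)
    (P : Finset (List Bool)) (hne : (⋃ w ∈ P, cyl w).Nonempty)
    (hstab : ∀ v : Cantor ≃ₜ Cantor, memV v →
      (∀ x ∈ F, v x = x ∧ HasLogSlope v x 0) →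
      (⇑v) '' (⋃ w ∈ P, cyl w) = ⋃ w ∈ P, cyl w) :
    (⋃ w ∈ P, cyl w) = Set.univ := by
  classical
  by_contra hI
  obtain ⟨x₀, hx₀⟩ : ∃ x, x ∉ ⋃ w ∈ P, cyl w := by
    by_contra h; push_neg at h; exact hI (Set.eq_univ_of_forall h)
  obtain ⟨p0, hp0⟩ := hne
  rw [Set.mem_iUnion₂] at hp0
  obtain ⟨w₀, hw₀P, _⟩ := hp0
  obtain ⟨N, hN⟩ : ∃ N, ∀ x ∈ F, ∀ m, N ≤ m → x m = false := by
    refine ⟨F.sup (fun x => if h : InQ2 x then h.choose else 0), ?_⟩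
    intro x hx m hm
    have h := hF x hx
    have hle : h.choose ≤ F.sup (fun x => if h : InQ2 x
        then h.choose else 0) := by
      have := Finset.le_sup (f := fun x => if h : InQ2 x
        then h.choose else 0) hx
      simpa only [dif_pos h] using this
    exact h.choose_spec m (le_trans hle hm)
  set K := max (max w₀.length (P.sup List.length)) N with hKdef
  have hwa : w₀.length ≤ K := le_trans (le_max_left _ _) (le_max_left _ _)
  have hPK : P.sup List.length ≤ K := le_trans (le_max_right _ _) (le_max_left _ _)
  have hNK : N ≤ K := le_max_right _ _
  set a := extWord w₀ K with hadef
  set b := extWord (pref x₀ K) K with hbdef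
  have hwb : (pref x₀ K).length ≤ K := by rw [pref_length]
  have hlen : b.length = a.length := by rw [hadef, hbdef, extWord_length, extWord_length]
  have hcylA : ∀ z, cat a z ∈ ⋃ w ∈ P, cyl w := fun z =>
    Set.mem_iUnion₂.2 ⟨w₀, hw₀P, mem_cyl_iff.2 (matches_extWord_sub hwa (matches_cat a z))⟩
  have hcylB : ∀ z, cat b z ∉ ⋃ w ∈ P, cyl w := by
    intro z hz
    rw [Set.mem_iUnion₂] at hz
    obtain ⟨w, hwP, hw⟩ := hz
    have hmw : Matches w (cat b z) := mem_cyl_iff.1 hw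
    have hmp : Matches (pref x₀ K) (cat b z) := matches_extWord_sub hwb (matches_cat b z)
    have hx₀w : Matches w x₀ := by
      rw [matches_congr (x' := cat b z)]
      · exact hmw
      · intro i hi
        have hiK : i < K := lt_of_lt_of_le hi (le_trans (Finset.le_sup hwP) hPK)
        have := hmp i (by rw [pref_length]; omega)
        rw [this, pref_getD x₀ K hiK]
    exact hx₀ (Set.mem_iUnion₂.2 ⟨w, hwP, mem_cyl_iff.2 hx₀w⟩)
  have hne' : a ≠ b := by
    intro h
    exact hcylB (fun _ => false) (h ▸ hcylA (fun _ => false))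
  set v := swapHomeo a b hlen hne' with hvdef
  have hFc : ∀ x ∈ F, v x = x ∧ HasLogSlope v x 0 := by
    intro x hx
    apply swap_fix_and_slope
    · intro hma
      have h1 := matches_extWord_last hwa hma
      rw [hN x hx K hNK] at h1
      exact Bool.false_ne_true h1
    · intro hmb
      have h1 := matches_extWord_last hwb hmb
      rw [hN x hx K hNK] at h1
      exact Bool.false_ne_true h1
  have him := hstab v (memV_swap a b hlen hne') hFc
  have hmem : v (cat a (fun _ => false)) ∈ ⋃ w ∈ P, cyl w := by
    rw [← him]
    exact Set.mem_image_of_mem _ (hcylA _)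
  have hveq : v (cat a (fun _ => false)) = cat b (fun _ => false) := swap_cat_a hlen _
  rw [hveq] at hmem
  exact hcylB _ hmem
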